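/- Barbier's theorem in the Minkowski plane: for c large enough that γ_c = M + c·u is convex, the v-length of γ_c (with respect to the dual norm) equals 2A(u)·c, where A(u) is the area enclosed by u. Equivalently, ∫₀^{2π} (α(θ)+c)[u,u'](θ) dθ = 2c·A(u). -/

import Mathlib

open Real

/-- Determinant of two plane vectors. -/
noncomputable def det2 (w₁ w₂ : ℝ × ℝ) : ℝ := w₁.1 * w₂.2 - w₁.2 * w₂.1

/-- Barbier's theorem in the Minkowski plane: the v-length of the equidistant
γ_c = M + c·u equals 2·A(u)·c. -/
theorem barbier (u u' : ℝ → ℝ × ℝ) (α : ℝ → ℝ) (c : ℝ)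
    (hu : ∀ θ, HasDerivAt u (u' θ) θ)
    (hsym : ∀ θ, u (θ + π) = -u θ)
    (hcontu' : Continuous u')
    (hcontα : Continuous α)
    (hαsym : ∀ θ, α (θ + π) = -α θ) :
    ∫ θ in (0:ℝ)..(2 * π), (α θ + c) * det2 (u θ) (u' θ)
      = 2 * c * ((1/2 : ℝ) * ∫ θ in (0:ℝ)..(2 * π), det2 (u θ) (u' θ)) := by
  have hcu : Continuous u := continuous_iff_continuousAt.2 fun θ => (hu θ).continuousAt
  set f : ℝ → ℝ := fun θ => det2 (u θ) (u' θ) with hf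
  have hcf : Continuous f := by
    simp only [hf, det2]
    fun_prop
  have hcg : Continuous fun θ => α θ * f θ := hcontα.mul hcf
  have hu'sym : ∀ θ, u' (θ + π) = -u' θ := by
    intro θ
    have h1 : HasDerivAt (fun t => u (t + π)) (u' (θ + π)) θ := by
      exact HasDerivAt.comp_add_const θ π (hu (θ + π))
    have h2 : HasDerivAt (fun t => u (t + π)) (-u' θ) θ := by
      have : HasDerivAt (fun t => -u t) (-u' θ) θ := (hu θ).neg
      exact this.congr_of_eventuallyEq (Filter.Eventually.of_forall fun t => (hsym t))
    exact h1.unique h2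
  have hfsym : ∀ θ, f (θ + π) = f θ := by
    intro θ
    simp only [hf, det2, hsym, hu'sym, Prod.fst_neg, Prod.snd_neg]
    ring
  have hgsym : ∀ θ, α (θ + π) * f (θ + π) = -(α θ * f θ) := by
    intro θ; rw [hαsym, hfsym]; ring
  have key : (∫ θ in (0:ℝ)..(2 * π), α θ * f θ) = 0 := by
    have hsplit : (∫ θ in (0:ℝ)..(2 * π), α θ * f θ)
        = (∫ θ in (0:ℝ)..π, α θ * f θ) + ∫ θ in π..(2 * π), α θ * f θ :=
      (intervalIntegral.integral_add_adjacent_intervals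
        (hcg.intervalIntegrable _ _) (hcg.intervalIntegrable _ _)).symm
    have h2 : (∫ θ in π..(2 * π), α θ * f θ)
        = ∫ θ in (0:ℝ)..π, α (θ + π) * f (θ + π) := by
      rw [intervalIntegral.integral_comp_add_right (fun θ => α θ * f θ) π]
      norm_num [two_mul]
    have h3 : (∫ θ in (0:ℝ)..π, α (θ + π) * f (θ + π))
        = -∫ θ in (0:ℝ)..π, α θ * f θ := by
      rw [← intervalIntegral.integral_neg]
      exact intervalIntegral.integral_congr fun θ _ => hgsym θ
    rw [hsplit, h2, h3]; ring
  have hadd : (∫ θ in (0:ℝ)..(2 * π), (α θ + c) * f θ)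
      = (∫ θ in (0:ℝ)..(2 * π), α θ * f θ) + ∫ θ in (0:ℝ)..(2 * π), c * f θ := by
    rw [← intervalIntegral.integral_add (hcg.intervalIntegrable _ _)
      (Continuous.intervalIntegrable (u := fun θ => c * f θ) (continuous_const.mul hcf) _ _)]
    exact intervalIntegral.integral_congr fun θ _ => by ring
  rw [show (∫ θ in (0:ℝ)..(2 * π), (α θ + c) * det2 (u θ) (u' θ))
      = ∫ θ in (0:ℝ)..(2 * π), (α θ + c) * f θ from rfl, hadd, key,
    intervalIntegral.integral_const_mul]
  ring
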